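/- In C^3 with sigma = z_1^2 + z_2^2 + z_3^2 and phi²_n as above, for each i one has z_i * phi²_n = (1/(2(1-n))) * d( (z_{i+2} dz_{i+1} - z_{i+1} dz_{i+2}) / sigma^{n-1} ) for n >= 2, where indices are taken mod 3. -/

import Mathlib

private lemma key_deriv (p : ℕ) (a k : Fin 3) (z : Fin 3 → ℂ)
    (hz : (∑ l : Fin 3, z l ^ 2) ≠ 0) :
    fderiv ℂ (fun w : Fin 3 → ℂ => w a / (∑ l : Fin 3, w l ^ 2) ^ (p + 1)) z
        (Pi.single k 1)
      = (if a = k then 1 else 0) / (∑ l : Fin 3, z l ^ 2) ^ (p + 1)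
        - 2 * (p + 1) * z a * z k / (∑ l : Fin 3, z l ^ 2) ^ (p + 2) := by
  have hproj : ∀ b : Fin 3, HasFDerivAt (fun w : Fin 3 → ℂ => w b)
      ((ContinuousLinearMap.proj b : (Fin 3 → ℂ) →L[ℂ] ℂ)) z :=
    fun b => hasFDerivAt_apply b z
  have hσ : HasFDerivAt (fun w : Fin 3 → ℂ => ∑ l : Fin 3, w l ^ 2)
      (∑ l : Fin 3, ((2 : ℕ) * z l ^ 1) • (ContinuousLinearMap.proj l :
        (Fin 3 → ℂ) →L[ℂ] ℂ)) z :=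
    HasFDerivAt.fun_sum fun l _ =>
      by simpa [Function.comp_def] using (hasDerivAt_pow 2 (z l)).comp_hasFDerivAt z (hproj l)
  have hpow : HasFDerivAt (fun w : Fin 3 → ℂ => (∑ l : Fin 3, w l ^ 2) ^ (p + 1))
      ((((p : ℂ) + 1) * (∑ l : Fin 3, z l ^ 2) ^ p) •
        (∑ l : Fin 3, ((2 : ℕ) * z l ^ 1) • (ContinuousLinearMap.proj l :
          (Fin 3 → ℂ) →L[ℂ] ℂ))) z := by
    have := (hasDerivAt_pow (p + 1) (∑ l : Fin 3, z l ^ 2)).comp_hasFDerivAt z hσ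
    simpa [Function.comp_def] using this
  have hne : (∑ l : Fin 3, z l ^ 2) ^ (p + 1) ≠ 0 := pow_ne_zero _ hz
  have hinv : HasFDerivAt (fun w : Fin 3 → ℂ => ((∑ l : Fin 3, w l ^ 2) ^ (p + 1))⁻¹)
      (-((((∑ l : Fin 3, z l ^ 2) ^ (p + 1)) ^ 2)⁻¹ •
        ((((p : ℂ) + 1) * (∑ l : Fin 3, z l ^ 2) ^ p) •
        (∑ l : Fin 3, ((2 : ℕ) * z l ^ 1) • (ContinuousLinearMap.proj l :
          (Fin 3 → ℂ) →L[ℂ] ℂ))))) z := by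
    have h := (hasDerivAt_inv hne).comp_hasFDerivAt z hpow
    exact h.congr_fderiv (by ext v; simp)
  have hdiv := (hproj a).fun_mul hinv
  have heq : (fun w : Fin 3 → ℂ => w a / (∑ l : Fin 3, w l ^ 2) ^ (p + 1))
      = fun w : Fin 3 → ℂ => w a * ((∑ l : Fin 3, w l ^ 2) ^ (p + 1))⁻¹ :=
    funext fun w => div_eq_mul_inv _ _
  rw [heq, hdiv.fderiv]
  simp only [ContinuousLinearMap.add_apply, ContinuousLinearMap.smul_apply,
    ContinuousLinearMap.neg_apply, ContinuousLinearMap.proj_apply,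
    ContinuousLinearMap.sum_apply, smul_eq_mul, pow_one]
  simp only [Pi.single_apply, mul_ite, mul_one, mul_zero, Finset.sum_ite_eq',
    Finset.mem_univ, if_true]
  by_cases hak : a = k
  · simp only [hak, if_true, reduceIte]
    field_simp
    ring
  · simp only [if_neg hak]
    field_simp
    ring

private lemma key_deriv_neg (p : ℕ) (a k : Fin 3) (z : Fin 3 → ℂ)
    (hz : (∑ l : Fin 3, z l ^ 2) ≠ 0) :
    fderiv ℂ (fun w : Fin 3 → ℂ => -(w a) / (∑ l : Fin 3, w l ^ 2) ^ (p + 1)) z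
        (Pi.single k 1)
      = -((if a = k then 1 else 0) / (∑ l : Fin 3, z l ^ 2) ^ (p + 1)
        - 2 * (p + 1) * z a * z k / (∑ l : Fin 3, z l ^ 2) ^ (p + 2)) := by
  have heq : (fun w : Fin 3 → ℂ => -(w a) / (∑ l : Fin 3, w l ^ 2) ^ (p + 1))
      = fun w : Fin 3 → ℂ => -(w a / (∑ l : Fin 3, w l ^ 2) ^ (p + 1)) :=
    funext fun w => neg_div _ _
  rw [heq, fderiv_fun_neg, ContinuousLinearMap.neg_apply, key_deriv p a k z hz]

private lemma sigma_split (z : Fin 3 → ℂ) (i : Fin 3) :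
    (∑ l : Fin 3, z l ^ 2) = z i ^ 2 + z (i + 1) ^ 2 + z (i + 2) ^ 2 := by
  fin_cases i <;> simp [Fin.sum_univ_three] <;> ring



/-- With `σ = z₁² + z₂² + z₃²` and
`φ²ₙ = ∑ⱼ zⱼ dz_{j+1}∧dz_{j+2}/σⁿ` (indices mod 3), for `n ≥ 2` one has
`zᵢ φ²ₙ = (1/(2(1-n))) d((z_{i+2}dz_{i+1} - z_{i+1}dz_{i+2})/σ^{n-1})`
in the graded quotient `gr_n Ω²` (i.e. modulo forms of pole order at most
`n-1`).  Stated componentwise: for each `j`, the `dz_{j+1}∧dz_{j+2}`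
coefficient `zᵢzⱼ/σⁿ` of the left side equals the corresponding coefficient
`(1/(2(1-n)))(∂_{j+1}B_{j+2} - ∂_{j+2}B_{j+1})` of the right side up to a
term `c/σ^{n-1}` of pole order at most `n-1`, where `B` is the coefficient
vector of the 1-form `(z_{i+2}dz_{i+1} - z_{i+1}dz_{i+2})/σ^{n-1}`. -/
theorem z_phi2_is_exact_in_graded (n : ℕ) (hn : 2 ≤ n) (i : Fin 3)
    (B : Fin 3 → (Fin 3 → ℂ) → ℂ)
    (hB : ∀ k w, B k w =
      (if k = i + 1 then w (i + 2) else if k = i + 2 then -(w (i + 1)) else 0)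
        / (∑ j : Fin 3, w j ^ 2) ^ (n - 1)) :
    ∀ j : Fin 3, ∃ c : ℂ, ∀ z : Fin 3 → ℂ, (∑ l : Fin 3, z l ^ 2) ≠ 0 →
      z i * z j / (∑ l : Fin 3, z l ^ 2) ^ n
        = (1 / (2 * (1 - (n : ℂ)))) *
            (fderiv ℂ (B (j + 2)) z (Pi.single (j + 1) 1)
              - fderiv ℂ (B (j + 1)) z (Pi.single (j + 2) 1))
          + c / (∑ l : Fin 3, z l ^ 2) ^ (n - 1) := by
  obtain ⟨m, rfl⟩ : ∃ m, n = m + 2 := ⟨n - 2, by omega⟩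
  have hsub : m + 2 - 1 = m + 1 := rfl
  rw [hsub] at hB
  have hmne : ((m : ℂ) + 1) ≠ 0 := by
    have := Nat.cast_add_one_ne_zero (R := ℂ) m
    simpa using this
  have hfac : (2 : ℂ) * (1 - ((m : ℂ) + 2)) ≠ 0 := by
    have h2 : (2 : ℂ) * (1 - ((m : ℂ) + 2)) = -2 * ((m : ℂ) + 1) := by ring
    rw [h2]
    exact mul_ne_zero (by norm_num) hmne
  -- identify the three relevant coefficient functions of B
  have hBi1 : B (i + 1) = fun w : Fin 3 → ℂ =>
      w (i + 2) / (∑ l : Fin 3, w l ^ 2) ^ (m + 1) := by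
    funext w
    rw [hB]
    simp
  have hBi2 : B (i + 2) = fun w : Fin 3 → ℂ =>
      -(w (i + 1)) / (∑ l : Fin 3, w l ^ 2) ^ (m + 1) := by
    funext w
    rw [hB]
    have h1 : (i + 2 : Fin 3) ≠ i + 1 := by fin_cases i <;> decide
    simp [h1]
  have hBi0 : B i = fun _ : Fin 3 → ℂ => 0 := by
    funext w
    rw [hB]
    have h1 : (i : Fin 3) ≠ i + 1 := by fin_cases i <;> decide
    have h2 : (i : Fin 3) ≠ i + 2 := by fin_cases i <;> decide
    simp [h1, h2]
  intro j
  have hj : j = i ∨ j = i + 1 ∨ j = i + 2 := by fin_cases i <;> fin_cases j <;> decide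
  have h11 : (i + 1 + 1 : Fin 3) = i + 2 := by fin_cases i <;> decide
  have h12 : (i + 1 + 2 : Fin 3) = i := by fin_cases i <;> decide
  have h21 : (i + 2 + 1 : Fin 3) = i := by fin_cases i <;> decide
  have h22 : (i + 2 + 2 : Fin 3) = i + 1 := by fin_cases i <;> decide
  rcases hj with rfl | rfl | rfl
  · -- j = i : exact up to c = m / (1 - (m+2))
    refine ⟨(m : ℂ) / ((m : ℂ) + 1), fun z hz => ?_⟩
    rw [hBi2, hBi1, key_deriv_neg m (j + 1) (j + 1) z hz,
      key_deriv m (j + 2) (j + 2) z hz]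
    simp only [if_pos rfl]
    rw [show (2 : ℂ) * ((m : ℂ) + 1) * z (j + 1) * z (j + 1)
          = 2 * ((m : ℂ) + 1) * z (j + 1) ^ 2 by ring,
      show (2 : ℂ) * ((m : ℂ) + 1) * z (j + 2) * z (j + 2)
          = 2 * ((m : ℂ) + 1) * ((∑ l : Fin 3, z l ^ 2) - z j ^ 2 - z (j + 1) ^ 2) by
        rw [sigma_split z j]; ring,
      show m + 2 - 1 = m + 1 from rfl]
    push_cast
    field_simp [hfac, hmne]
    have hD : (2 * (1 - ((m : ℂ) + 2)) * ((∑ l : Fin 3, z l ^ 2) ^ (m + 1) *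
          (∑ l : Fin 3, z l ^ 2) ^ (m + 2)) *
        (((m : ℂ) + 1) * (∑ l : Fin 3, z l ^ 2) ^ (m + 1))) ≠ 0 :=
      mul_ne_zero (mul_ne_zero hfac
        (mul_ne_zero (pow_ne_zero _ hz) (pow_ne_zero _ hz)))
        (mul_ne_zero hmne (pow_ne_zero _ hz))
    have h1 : (1 - ((m : ℂ) + 2)) ≠ 0 := right_ne_zero_of_mul hfac
    rw [div_add' _ _ _ h1, eq_div_iff h1]
    ring
  · -- j = i + 1
    refine ⟨0, fun z hz => ?_⟩
    rw [h12, h11, hBi0, hBi2, key_deriv_neg m (i + 1) i z hz]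
    have hne : (i + 1 : Fin 3) ≠ i := by fin_cases i <;> decide
    simp only [if_neg hne, fderiv_fun_const, Pi.zero_apply,
      ContinuousLinearMap.zero_apply]
    push_cast
    field_simp [hfac]
    have h1 : (1 - ((m : ℂ) + 2)) ≠ 0 := right_ne_zero_of_mul hfac
    rw [div_add' _ _ _ h1, eq_div_iff h1]
    ring
  · -- j = i + 2
    refine ⟨0, fun z hz => ?_⟩
    rw [h21, h22, hBi1, hBi0, key_deriv m (i + 2) i z hz]
    have hne : (i + 2 : Fin 3) ≠ i := by fin_cases i <;> decide
    simp only [if_neg hne, fderiv_fun_const, Pi.zero_apply,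
      ContinuousLinearMap.zero_apply]
    push_cast
    field_simp [hfac]
    have h1 : (1 - ((m : ℂ) + 2)) ≠ 0 := right_ne_zero_of_mul hfac
    rw [div_add' _ _ _ h1, eq_div_iff h1]
    ring
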